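/- If a nonnegative matrix A = [a_{ij}] satisfies sup_i Σ_j a_{ij}² ≤ L², then every matrix S with |s_{ij}| ≤ a_{ij} has Schur multiplier norm at most L. -/

import Mathlib

open scoped ENNReal ComplexOrder
open Matrix
set_option synthInstance.maxHeartbeats 1000000
set_option maxHeartbeats 1000000

noncomputable def opNorm2 {m : Type*} [Fintype m] [DecidableEq m] (M : Matrix m m ℂ) : ℝ :=
  ‖Matrix.toEuclideanCLM (𝕜 := ℂ) M‖

lemma opNorm2_nonneg {m : Type*} [Fintype m] [DecidableEq m] (M : Matrix m m ℂ) :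
    0 ≤ opNorm2 M := norm_nonneg _

lemma opNorm2_conjTranspose {m : Type*} [Fintype m] [DecidableEq m] (M : Matrix m m ℂ) :
    opNorm2 Mᴴ = opNorm2 M := by
  show ‖Matrix.toEuclideanCLM (𝕜 := ℂ) (star M)‖ = _
  rw [map_star, ContinuousLinearMap.star_eq_adjoint]
  exact ContinuousLinearMap.adjoint.norm_map _

lemma mulVec_sq_sum_le {m : Type*} [Fintype m] [DecidableEq m] (X : Matrix m m ℂ)
    (u : m → ℂ) :
    ∑ i, ‖X.mulVec u i‖ ^ 2 ≤ (opNorm2 X) ^ 2 * ∑ j, ‖u j‖ ^ 2 := by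
  have key : ‖Matrix.toEuclideanCLM (𝕜 := ℂ) X ((WithLp.equiv 2 (m → ℂ)).symm u)‖ ≤
      opNorm2 X * ‖(WithLp.equiv 2 (m → ℂ)).symm u‖ :=
    (Matrix.toEuclideanCLM (𝕜 := ℂ) X).le_opNorm _
  rw [show Matrix.toEuclideanCLM (𝕜 := ℂ) X ((WithLp.equiv 2 (m → ℂ)).symm u) =
      (WithLp.equiv 2 (m → ℂ)).symm (X.mulVec u) from rfl] at key
  have h1 : ‖(WithLp.equiv 2 (m → ℂ)).symm (X.mulVec u)‖ ^ 2 = ∑ i, ‖X.mulVec u i‖ ^ 2 := by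
    rw [EuclideanSpace.norm_eq, Real.sq_sqrt (by positivity)]
    rfl
  have h2 : ‖(WithLp.equiv 2 (m → ℂ)).symm u‖ ^ 2 = ∑ j, ‖u j‖ ^ 2 := by
    rw [EuclideanSpace.norm_eq, Real.sq_sqrt (by positivity)]
    rfl
  calc ∑ i, ‖X.mulVec u i‖ ^ 2 = _ := h1.symm
    _ ≤ (opNorm2 X * ‖(WithLp.equiv 2 (m → ℂ)).symm u‖) ^ 2 := by
        apply pow_le_pow_left₀ (norm_nonneg _) key
    _ = (opNorm2 X) ^ 2 * ∑ j, ‖u j‖ ^ 2 := by rw [mul_pow, h2]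

/-- Core: column-sum bound gives Schur multiplier bound. -/
lemma core {m : Type*} [Fintype m] [DecidableEq m] (M X : Matrix m m ℂ) (L : ℝ) (hL : 0 ≤ L)
    (hcol : ∀ j, ∑ i, ‖M i j‖ ^ 2 ≤ L ^ 2) (hX : opNorm2 X ≤ 1) :
    opNorm2 (M.hadamard X) ≤ L := by
  apply ContinuousLinearMap.opNorm_le_bound _ hL
  intro x
  set u : m → ℂ := WithLp.equiv 2 (m → ℂ) x with hu
  have hx : x = (WithLp.equiv 2 (m → ℂ)).symm u := rfl
  rw [hx, show Matrix.toEuclideanCLM (𝕜 := ℂ) (M.hadamard X) ((WithLp.equiv 2 (m → ℂ)).symm u) =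
      (WithLp.equiv 2 (m → ℂ)).symm ((M.hadamard X).mulVec u) from rfl]
  have hnormx : ‖(WithLp.equiv 2 (m → ℂ)).symm u‖ ^ 2 = ∑ j, ‖u j‖ ^ 2 := by
    rw [EuclideanSpace.norm_eq, Real.sq_sqrt (by positivity)]
    rfl
  have hsq : ‖(WithLp.equiv 2 (m → ℂ)).symm ((M.hadamard X).mulVec u)‖ ^ 2 ≤
      (L * ‖(WithLp.equiv 2 (m → ℂ)).symm u‖) ^ 2 := by
    rw [EuclideanSpace.norm_eq, Real.sq_sqrt (by positivity)]
    show ∑ i, ‖(M.hadamard X).mulVec u i‖ ^ 2 ≤ _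
    have step1 : ∀ i, (M.hadamard X).mulVec u i = X.mulVec (fun j => M i j * u j) i := by
      intro i
      simp only [Matrix.mulVec, dotProduct, Matrix.hadamard_apply]
      exact Finset.sum_congr rfl fun j _ => by ring
    calc ∑ i, ‖(M.hadamard X).mulVec u i‖ ^ 2
        ≤ ∑ i, ∑ k, ‖X.mulVec (fun j => M i j * u j) k‖ ^ 2 := by
          apply Finset.sum_le_sum
          intro i _
          rw [step1 i]
          exact Finset.single_le_sum (f := fun k => ‖X.mulVec (fun j => M i j * u j) k‖ ^ 2)
            (fun k _ => by positivity) (Finset.mem_univ i)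
      _ ≤ ∑ i, (opNorm2 X) ^ 2 * ∑ j, ‖M i j * u j‖ ^ 2 := by
          exact Finset.sum_le_sum fun i _ => mulVec_sq_sum_le X _
      _ ≤ ∑ i, ∑ j, ‖M i j * u j‖ ^ 2 := by
          apply Finset.sum_le_sum
          intro i _
          have h1 : (opNorm2 X) ^ 2 ≤ 1 := by
            have := opNorm2_nonneg X
            nlinarith
          nlinarith [Finset.sum_nonneg (fun j (_ : j ∈ Finset.univ) =>
            sq_nonneg ‖M i j * u j‖)]
      _ = ∑ j, (∑ i, ‖M i j‖ ^ 2) * ‖u j‖ ^ 2 := by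
          rw [Finset.sum_comm]
          congr 1; ext j
          rw [Finset.sum_mul]
          congr 1; ext i
          rw [norm_mul, mul_pow]
      _ ≤ ∑ j, L ^ 2 * ‖u j‖ ^ 2 := by
          exact Finset.sum_le_sum fun j _ => by
            have := hcol j
            nlinarith [sq_nonneg ‖u j‖]
      _ = (L * ‖(WithLp.equiv 2 (m → ℂ)).symm u‖) ^ 2 := by
          rw [mul_pow, hnormx, Finset.mul_sum]
  have h := Real.sqrt_le_sqrt hsq
  rwa [Real.sqrt_sq (norm_nonneg _), Real.sqrt_sq (by positivity)] at h

noncomputable def schurNorm {m : Type*} [Fintype m] [DecidableEq m] (M : Matrix m m ℂ) : ℝ :=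
  ⨆ X : {X : Matrix m m ℂ // opNorm2 X ≤ 1}, opNorm2 (M.hadamard X.1)

lemma schurNorm_le {m : Type*} [Fintype m] [DecidableEq m] (M : Matrix m m ℂ) (L : ℝ)
    (hL : 0 ≤ L) (hrow : ∀ i, ∑ j, ‖M i j‖ ^ 2 ≤ L ^ 2) : schurNorm M ≤ L := by
  have hne : Nonempty {X : Matrix m m ℂ // opNorm2 X ≤ 1} := ⟨0, by
    show ‖Matrix.toEuclideanCLM (𝕜 := ℂ) (0 : Matrix m m ℂ)‖ ≤ 1
    rw [map_zero, norm_zero]; norm_num⟩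
  apply ciSup_le
  intro ⟨X, hX⟩
  have key : opNorm2 (Mᴴ.hadamard Xᴴ) ≤ L := by
    apply core _ _ _ hL _ (by rwa [opNorm2_conjTranspose])
    intro j
    simpa using hrow j
  have heq : (M.hadamard X)ᴴ = Mᴴ.hadamard Xᴴ := by
    ext i j
    simp [Matrix.conjTranspose_apply, Matrix.hadamard_apply]
  rwa [← opNorm2_conjTranspose, heq]

noncomputable def schurNormENN (A : ℕ → ℕ → ℂ) : ℝ≥0∞ :=
  ⨆ n : ℕ, ENNReal.ofReal (schurNorm (Matrix.of fun i j : Fin n => A i j))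

noncomputable def schurBound (P : Set (ℕ × ℕ)) : ℝ≥0∞ :=
  ⨆ S : {S : ℕ → ℕ → ℂ //
      (∀ i j, ‖S i j‖ ≤ 1) ∧ ∀ i j, (i, j) ∉ P → S i j = 0},
    schurNormENN S.1

noncomputable def matAbs {m : Type*} [Fintype m] [DecidableEq m] (T : Matrix m m ℂ) :
    Matrix m m ℂ :=
  ((Matrix.posSemidef_conjTranspose_mul_self T).1.eigenvectorUnitary : Matrix m m ℂ) *
    Matrix.diagonal ((↑) ∘ Real.sqrt ∘ (Matrix.posSemidef_conjTranspose_mul_self T).1.eigenvalues) *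
    (star ((Matrix.posSemidef_conjTranspose_mul_self T).1.eigenvectorUnitary : Matrix m m ℂ))

theorem stmt_1 (A : ℕ → ℕ → ℝ) (L : ℝ) (hL : 0 ≤ L)
    (hA : ∀ i j, 0 ≤ A i j)
    (hrow : ∀ i, ∑' j, ENNReal.ofReal ((A i j) ^ 2) ≤ ENNReal.ofReal (L ^ 2))
    (S : ℕ → ℕ → ℂ) (hS : ∀ i j, ‖S i j‖ ≤ A i j) :
    schurNormENN S ≤ ENNReal.ofReal L := by
  apply iSup_le
  intro n
  apply ENNReal.ofReal_le_ofReal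
  apply schurNorm_le _ _ hL
  intro i
  have hfin : ∑ j : Fin n, (A i j) ^ 2 ≤ L ^ 2 := by
    have h1 : ∑ j ∈ Finset.range n, ENNReal.ofReal ((A i j) ^ 2) ≤ ENNReal.ofReal (L ^ 2) :=
      le_trans (ENNReal.sum_le_tsum _) (hrow i)
    rw [← ENNReal.ofReal_sum_of_nonneg (fun j _ => sq_nonneg _)] at h1
    have h2 := (ENNReal.ofReal_le_ofReal_iff (by positivity)).mp h1
    rw [Fin.sum_univ_eq_sum_range (fun j => (A i j) ^ 2)]
    exact h2
  refine le_trans (Finset.sum_le_sum fun j _ => ?_) hfin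
  have h3 := hS i j
  rw [Matrix.of_apply]
  have h4 : ‖S (i : ℕ) (j : ℕ)‖ = ‖S i j‖ := rfl
  nlinarith [norm_nonneg (S (i : ℕ) (j : ℕ)), hA (i : ℕ) (j : ℕ)]
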